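/- Let n ≥ 1, T > 0, α₁, …, αₙ ∈ (0,1], p > max{1/α_j : j ∈ {1,…,n}}, let f = (f₁,…,fₙ) : ℝⁿ × [0,T] → ℝⁿ be an L^p-Carathéodory function with Lipschitz function ℓ ∈ L^p(0,T), and ξ ∈ ℝⁿ. Set α₀ := min{α_j}, M := Σ_{j=1}^n T^{α_j − α₀} Γ(α₀)/Γ(α_j), define T(φ)(t) := ξ + (J^{α_1} f₁(φ(·),·)(t), …, J^{α_n} f_n(φ(·),·)(t)), and define F₁(t) := J^{α₀}(Mℓ)(t) and F_{k+1}(t) := J^{α₀}(Mℓ · F_k)(t) for k ≥ 1. Then for every k ∈ ℕ, all continuous φ, ψ : [0,T] → ℝⁿ and all t ∈ [0,T], ‖T^k(φ)(t) − T^k(ψ)(t)‖_{ℝⁿ} ≤ ‖φ − ψ‖_{C([0,T];ℝⁿ)} · F_k(t), where T^k denotes the k-fold composition of T. -/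

import Mathlib

open MeasureTheory Real Set

/-- The Riemann–Liouville fractional integral of order `α`:
`J^α g (t) = (1/Γ(α)) ∫₀ᵗ (t-s)^(α-1) g(s) ds`. -/
noncomputable def rlInt {E : Type*} [NormedAddCommGroup E] [NormedSpace ℝ E]
    (α : ℝ) (g : ℝ → E) (t : ℝ) : E :=
  (Real.Gamma α)⁻¹ • ∫ s in (0:ℝ)..t, (t - s) ^ (α - 1) • g s

/-- `f : ℝⁿ × [0,T] → ℝⁿ` is a Carathéodory function: `x ↦ f x t` is continuous for a.e.
`t ∈ [0,T]` and `t ↦ f x t` is Lebesgue measurable for every `x`. -/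
def IsCaratheodory {n : ℕ} (T : ℝ)
    (f : EuclideanSpace ℝ (Fin n) → ℝ → EuclideanSpace ℝ (Fin n)) : Prop :=
  (∀ᵐ t ∂(volume.restrict (Icc (0:ℝ) T)), Continuous fun x => f x t) ∧
  ∀ x, Measurable fun t => f x t

/-- `f` is an `L^p`-Carathéodory function: Carathéodory, with an `L^p` growth bound
`‖f(x,t)‖ ≤ C‖x‖ + γ(t)` and an `L^p` Lipschitz bound `‖f(x,t) - f(y,t)‖ ≤ ℓ(t)‖x - y‖`. -/
def IsLpCaratheodory {n : ℕ} (p T : ℝ)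
    (f : EuclideanSpace ℝ (Fin n) → ℝ → EuclideanSpace ℝ (Fin n)) : Prop :=
  IsCaratheodory T f ∧
  (∃ C > (0:ℝ), ∃ γ : ℝ → ℝ, MemLp γ (ENNReal.ofReal p) (volume.restrict (Icc (0:ℝ) T)) ∧
    ∀ᵐ t ∂(volume.restrict (Icc (0:ℝ) T)), ∀ x, ‖f x t‖ ≤ C * ‖x‖ + γ t) ∧
  (∃ ℓ : ℝ → ℝ, MemLp ℓ (ENNReal.ofReal p) (volume.restrict (Icc (0:ℝ) T)) ∧
    ∀ᵐ t ∂(volume.restrict (Icc (0:ℝ) T)), ∀ x y, ‖f x t - f y t‖ ≤ ℓ t * ‖x - y‖)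

/-- The operator `𝒯(φ)(t) = ξ + (J^{α_1} f₁(φ(·),·)(t), …, J^{α_n} f_n(φ(·),·)(t))`
associated to the fractional system. -/
noncomputable def caraOp {n : ℕ} (α : Fin n → ℝ)
    (f : EuclideanSpace ℝ (Fin n) → ℝ → EuclideanSpace ℝ (Fin n))
    (ξ : EuclideanSpace ℝ (Fin n)) (φ : ℝ → EuclideanSpace ℝ (Fin n)) :
    ℝ → EuclideanSpace ℝ (Fin n) :=
  fun t => ξ + (show EuclideanSpace ℝ (Fin n) from WithLp.toLp 2 (fun j => rlInt (α j) (fun s => f (φ s) s j) t))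

/-- The iterated Riemann–Liouville integrals: `iterJ ρ g 1 = J^ρ g` and
`iterJ ρ g (k+1) = J^ρ (g · iterJ ρ g k)`. -/
noncomputable def iterJ (ρ : ℝ) (g : ℝ → ℝ) : ℕ → ℝ → ℝ
  | 0 => fun _ => 1
  | k + 1 => fun t => rlInt ρ (fun s => g s * iterJ ρ g k s) t


section Aux
open intervalIntegral
open scoped ENNReal NNReal

lemma diff_integral_bound {E : Type*} [NormedAddCommGroup E] [NormedSpace ℝ E]
    {A B : ℝ → E} {g : ℝ → ℝ} {t : ℝ} (ht : 0 ≤ t)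
    (hA : AEStronglyMeasurable A (volume.restrict (Ioc (0:ℝ) t)))
    (hB : AEStronglyMeasurable B (volume.restrict (Ioc (0:ℝ) t)))
    (hg : IntegrableOn g (Ioc (0:ℝ) t) volume)
    (hbd : ∀ᵐ s ∂volume.restrict (Ioc (0:ℝ) t), ‖A s - B s‖ ≤ g s) :
    ‖(∫ s in (0:ℝ)..t, A s) - ∫ s in (0:ℝ)..t, B s‖ ≤ ∫ s in (0:ℝ)..t, g s := by
  have huIoc : Set.uIoc (0:ℝ) t = Ioc 0 t := uIoc_of_le ht
  have hgI : IntervalIntegrable g volume 0 t := by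
    rw [intervalIntegrable_iff, huIoc]; exact hg
  have hsub : IntegrableOn (fun s => A s - B s) (Ioc (0:ℝ) t) volume :=
    Integrable.mono' hg (hA.sub hB) hbd
  have hgnn : ∀ᵐ s ∂volume.restrict (Ioc (0:ℝ) t), 0 ≤ g s :=
    hbd.mono fun s hs => le_trans (norm_nonneg _) hs
  by_cases hIA : IntervalIntegrable A volume 0 t
  · have hIB : IntervalIntegrable B volume 0 t := by
      have : IntervalIntegrable (fun s => A s - B s) volume 0 t := by
        rw [intervalIntegrable_iff, huIoc]; exact hsub
      simpa using hIA.sub this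
    rw [← integral_sub hIA hIB]
    calc ‖∫ s in (0:ℝ)..t, (A s - B s)‖ ≤ |∫ s in (0:ℝ)..t, g s| := by
          apply norm_integral_le_abs_of_norm_le _ hgI
          rw [huIoc]; exact hbd
      _ = ∫ s in (0:ℝ)..t, g s := by
          rw [abs_eq_self]
          rw [integral_of_le ht]
          exact integral_nonneg_of_ae hgnn
  · have hIB : ¬ IntervalIntegrable B volume 0 t := by
      intro hIB
      apply hIA
      have : IntervalIntegrable (fun s => A s - B s) volume 0 t := by
        rw [intervalIntegrable_iff, huIoc]; exact hsub
      simpa using this.add hIB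
    rw [integral_undef hIA, integral_undef hIB, sub_zero, norm_zero, integral_of_le ht]
    exact integral_nonneg_of_ae hgnn

lemma kernel_holder {p ρ T : ℝ} (hρ : 0 < ρ) (hρ1 : ρ ≤ 1) (hpρ : 1 / ρ < p) (hT : 0 < T)
    {ℓ : ℝ → ℝ} (hℓ : MemLp ℓ (ENNReal.ofReal p) (volume.restrict (Icc (0:ℝ) T))) :
    ∃ K : ℝ, ∀ t ∈ Icc (0:ℝ) T,
      IntegrableOn (fun s => (t - s) ^ (ρ - 1) * |ℓ s|) (Ioc (0:ℝ) t) volume ∧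
      ∫ s in Ioc (0:ℝ) t, (t - s) ^ (ρ - 1) * |ℓ s| ≤ K := by
  have hρp : 1 < ρ * p := by
    rw [div_lt_iff₀ hρ] at hpρ; linarith [hpρ]
  have hp1 : 1 < p := by nlinarith
  set q : ℝ := p.conjExponent with hq
  have hpq : p.HolderConjugate q := Real.HolderConjugate.conjExponent hp1
  set r : ℝ := (ρ - 1) * q with hrdef
  have hr : -1 < r := by
    have hq' : q = p / (p - 1) := rfl
    rw [hrdef, hq', div_eq_mul_inv, ← mul_assoc]
    rw [neg_lt, ← neg_mul]
    have h1 : 0 < p - 1 := by linarith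
    rw [mul_inv_lt_iff₀ h1]
    nlinarith
  set m : ℝ := r + 1 with hm
  have hm0 : 0 < m := by linarith
  set Kenn : ℝ≥0∞ := eLpNorm ℓ (ENNReal.ofReal p) (volume.restrict (Icc (0:ℝ) T)) *
    (ENNReal.ofReal (T ^ m / m)) ^ (1 / q) with hKenn
  have hKenn_ne_top : Kenn ≠ ∞ := by
    apply ENNReal.mul_ne_top hℓ.2.ne
    exact ENNReal.rpow_ne_top_of_nonneg hpq.symm.one_div_nonneg ENNReal.ofReal_ne_top
  refine ⟨Kenn.toReal, fun t ht => ?_⟩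
  have ht0 : (0:ℝ) ≤ t := ht.1
  have hsub : Ioc (0:ℝ) t ⊆ Icc (0:ℝ) T := fun s hs => ⟨hs.1.le, hs.2.trans ht.2⟩
  have hmono : volume.restrict (Ioc (0:ℝ) t) ≤ volume.restrict (Icc (0:ℝ) T) :=
    Measure.restrict_mono hsub le_rfl
  -- kernel power integrability and value
  have hK_II : IntervalIntegrable (fun s => (t - s) ^ r) volume 0 t := by
    have h1 : IntervalIntegrable (fun x : ℝ => x ^ r) volume 0 t :=
      intervalIntegrable_rpow' hr
    simpa using (h1.comp_sub_left t).symm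
  have hKint : IntegrableOn (fun s => (t - s) ^ r) (Ioc (0:ℝ) t) volume := by
    rw [← uIoc_of_le ht0, ← intervalIntegrable_iff]; exact hK_II
  have hKval : ∫ s in Ioc (0:ℝ) t, (t - s) ^ r ≤ T ^ m / m := by
    rw [← integral_of_le ht0]
    rw [integral_comp_sub_left (fun x : ℝ => x ^ r) t]
    simp only [sub_zero, sub_self]
    rw [integral_rpow (Or.inl hr)]
    rw [Real.zero_rpow (by positivity : r + 1 ≠ 0), sub_zero]
    exact (div_le_div_iff_of_pos_right hm0).2 (Real.rpow_le_rpow ht0 ht.2 hm0.le)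
  -- measurability
  have hkmeas : Measurable fun s : ℝ => (t - s) ^ (ρ - 1) :=
    (measurable_const.sub measurable_id).pow measurable_const
  have hℓt : AEStronglyMeasurable ℓ (volume.restrict (Ioc (0:ℝ) t)) :=
    hℓ.1.mono_measure hmono
  have hAESM : AEStronglyMeasurable (fun s => (t - s) ^ (ρ - 1) * |ℓ s|)
      (volume.restrict (Ioc (0:ℝ) t)) :=
    hkmeas.aestronglyMeasurable.mul (by simpa [Real.norm_eq_abs] using hℓt.norm)
  -- a.e. facts on the restricted measure
  have hmem : ∀ᵐ s ∂volume.restrict (Ioc (0:ℝ) t), s ∈ Ioc (0:ℝ) t :=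
    ae_restrict_mem measurableSet_Ioc
  have hnn : ∀ᵐ s ∂volume.restrict (Ioc (0:ℝ) t),
      0 ≤ (t - s) ^ (ρ - 1) * |ℓ s| := by
    filter_upwards [hmem] with s hs
    have : (0:ℝ) ≤ t - s := by linarith [hs.2]
    positivity
  -- the key lintegral bound
  have hlint : ∫⁻ s in Ioc (0:ℝ) t, ENNReal.ofReal ((t - s) ^ (ρ - 1) * |ℓ s|) ≤ Kenn := by
    have heq : ∀ᵐ s ∂volume.restrict (Ioc (0:ℝ) t),
        ENNReal.ofReal ((t - s) ^ (ρ - 1) * |ℓ s|) =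
        ((‖ℓ s‖₊ : ℝ≥0∞) * ENNReal.ofReal ((t - s) ^ (ρ - 1))) := by
      filter_upwards [hmem] with s hs
      have hts : (0:ℝ) ≤ t - s := by linarith [hs.2]
      rw [ENNReal.ofReal_mul (by positivity), ← Real.enorm_eq_ofReal (abs_nonneg _)]
      simp [mul_comm, Real.nnnorm_abs]; rfl
    rw [lintegral_congr_ae heq]
    calc ∫⁻ s in Ioc (0:ℝ) t, ((‖ℓ s‖₊ : ℝ≥0∞) * ENNReal.ofReal ((t - s) ^ (ρ - 1)))
        ≤ (∫⁻ s in Ioc (0:ℝ) t, (‖ℓ s‖₊ : ℝ≥0∞) ^ p) ^ (1/p) *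
          (∫⁻ s in Ioc (0:ℝ) t, (ENNReal.ofReal ((t - s) ^ (ρ - 1))) ^ q) ^ (1/q) := by
          apply ENNReal.lintegral_mul_le_Lp_mul_Lq _ hpq
          · exact (hℓt.aemeasurable.enorm)
          · exact (hkmeas.ennreal_ofReal).aemeasurable
      _ ≤ Kenn := by
          rw [hKenn]
          refine mul_le_mul' ?_ ?_
          · -- ℓ part
            have h1 : (∫⁻ s in Ioc (0:ℝ) t, (‖ℓ s‖₊ : ℝ≥0∞) ^ p) ≤
                ∫⁻ s in Icc (0:ℝ) T, (‖ℓ s‖₊ : ℝ≥0∞) ^ p := lintegral_mono' hmono le_rfl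
            calc (∫⁻ s in Ioc (0:ℝ) t, (‖ℓ s‖₊ : ℝ≥0∞) ^ p) ^ (1/p)
                ≤ (∫⁻ s in Icc (0:ℝ) T, (‖ℓ s‖₊ : ℝ≥0∞) ^ p) ^ (1/p) :=
                  ENNReal.rpow_le_rpow h1 hpq.one_div_nonneg
              _ = eLpNorm ℓ (ENNReal.ofReal p) (volume.restrict (Icc (0:ℝ) T)) := by
                  rw [eLpNorm_eq_lintegral_rpow_enorm_toReal (by simp [hpq.pos] : ENNReal.ofReal p ≠ 0)
                    ENNReal.ofReal_ne_top]
                  rw [ENNReal.toReal_ofReal hpq.nonneg]; rfl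
          · -- kernel part
            have heq2 : ∀ᵐ s ∂volume.restrict (Ioc (0:ℝ) t),
                (ENNReal.ofReal ((t - s) ^ (ρ - 1))) ^ q = ENNReal.ofReal ((t - s) ^ r) := by
              filter_upwards [hmem] with s hs
              have hts : (0:ℝ) ≤ t - s := by linarith [hs.2]
              rw [ENNReal.ofReal_rpow_of_nonneg (by positivity) hpq.symm.nonneg]
              rw [hrdef, Real.rpow_mul hts]
            rw [lintegral_congr_ae heq2]
            refine ENNReal.rpow_le_rpow ?_ hpq.symm.one_div_nonneg
            rw [← ofReal_integral_eq_lintegral_ofReal hKint]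
            · exact ENNReal.ofReal_le_ofReal hKval
            · filter_upwards [hmem] with s hs
              have hts : (0:ℝ) ≤ t - s := by linarith [hs.2]
              positivity
  have hfin : HasFiniteIntegral (fun s => (t - s) ^ (ρ - 1) * |ℓ s|)
      (volume.restrict (Ioc (0:ℝ) t)) := by
    rw [hasFiniteIntegral_iff_norm]
    calc ∫⁻ s in Ioc (0:ℝ) t, ENNReal.ofReal ‖(t - s) ^ (ρ - 1) * |ℓ s|‖
        = ∫⁻ s in Ioc (0:ℝ) t, ENNReal.ofReal ((t - s) ^ (ρ - 1) * |ℓ s|) := by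
          apply lintegral_congr_ae
          filter_upwards [hnn] with s hs
          rw [Real.norm_eq_abs, abs_of_nonneg hs]
      _ ≤ Kenn := hlint
      _ < ∞ := hKenn_ne_top.lt_top
  refine ⟨⟨hAESM, hfin⟩, ?_⟩
  rw [integral_eq_lintegral_of_nonneg_ae hnn hAESM]
  exact ENNReal.toReal_mono hKenn_ne_top hlint

lemma rlInt_aesm {E : Type*} [NormedAddCommGroup E] [NormedSpace ℝ E]
    {ρ T : ℝ} {h : ℝ → E}
    (hh : AEStronglyMeasurable h (volume.restrict (Icc (0:ℝ) T))) :
    AEStronglyMeasurable (fun t => rlInt ρ h t) (volume.restrict (Icc (0:ℝ) T)) := by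
  set μ := volume.restrict (Icc (0:ℝ) T) with hμ
  set ν := volume.restrict (Ioc (0:ℝ) T) with hν
  have hνμ : ν ≤ μ := Measure.restrict_mono Ioc_subset_Icc_self le_rfl
  have hhν : AEStronglyMeasurable h ν := hh.mono_measure hνμ
  set F : ℝ × ℝ → E := fun q =>
    Set.indicator {q : ℝ × ℝ | 0 < q.2 ∧ q.2 ≤ q.1}
      (fun q => (q.1 - q.2) ^ (ρ - 1) • h q.2) q with hF
  have hS : MeasurableSet {q : ℝ × ℝ | 0 < q.2 ∧ q.2 ≤ q.1} :=
    (measurableSet_lt measurable_const measurable_snd).inter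
      (measurableSet_le measurable_snd measurable_fst)
  have hFm : AEStronglyMeasurable F (μ.prod ν) := by
    apply AEStronglyMeasurable.indicator _ hS
    apply AEStronglyMeasurable.smul
    · exact ((measurable_fst.sub measurable_snd).pow measurable_const).aestronglyMeasurable
    · exact hhν.comp_quasiMeasurePreserving Measure.quasiMeasurePreserving_snd
  have key : AEStronglyMeasurable (fun t => ∫ s, F (t, s) ∂ν) μ :=
    hFm.integral_prod_right'
  refine (key.const_smul (Real.Gamma ρ)⁻¹).congr ?_
  filter_upwards [ae_restrict_mem measurableSet_Icc] with t ht
  have hfun : (fun s => F (t, s)) = (Ioc (0:ℝ) t).indicator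
      (fun s => (t - s) ^ (ρ - 1) • h s) := by
    funext s
    simp only [hF, Set.indicator_apply, Set.mem_setOf_eq, Set.mem_Ioc]
  simp only [Pi.smul_apply]
  rw [rlInt, intervalIntegral.integral_of_le ht.1]
  rw [hfun, MeasureTheory.integral_indicator measurableSet_Ioc, hν,
    Measure.restrict_restrict measurableSet_Ioc,
    Set.inter_eq_self_of_subset_left (Ioc_subset_Ioc le_rfl ht.2)]

lemma comp_cara_aesm {n : ℕ} {T : ℝ}
    {f : EuclideanSpace ℝ (Fin n) → ℝ → EuclideanSpace ℝ (Fin n)}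
    (hcar : IsCaratheodory T f) {φ : ℝ → EuclideanSpace ℝ (Fin n)}
    (hφ : AEStronglyMeasurable φ (volume.restrict (Icc (0:ℝ) T))) :
    AEStronglyMeasurable (fun s => f (φ s) s) (volume.restrict (Icc (0:ℝ) T)) := by
  obtain ⟨φ', hφ'm, hφeq⟩ := hφ
  have hmain : AEStronglyMeasurable (fun s => f (φ' s) s)
      (volume.restrict (Icc (0:ℝ) T)) := by
    apply aestronglyMeasurable_of_tendsto_ae (u := Filter.atTop)
      (f := fun m s => f (hφ'm.approx m s) s)
    · intro m
      exact (SimpleFunc.measurable_bind (hφ'm.approx m) (fun x s => f x s)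
        (fun b => hcar.2 b)).aestronglyMeasurable
    · filter_upwards [hcar.1] with s hs
      exact ((hs.tendsto _).comp (hφ'm.tendsto_approx s))
  exact hmain.congr (hφeq.symm.mono fun s hs => by simp only [hs])

lemma pi_to_euclidean_aesm {n : ℕ} {μ : Measure ℝ}
    {g : ℝ → EuclideanSpace ℝ (Fin n)}
    (hg : ∀ j, AEStronglyMeasurable (fun t => g t j) μ) : AEStronglyMeasurable g μ := by
  choose G hGm hGe using hg
  refine ⟨fun t => (show EuclideanSpace ℝ (Fin n) from WithLp.toLp 2 (fun j => G j t)), ?_, ?_⟩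
  · apply Measurable.stronglyMeasurable
    have hpi : Measurable (fun t => (fun j => G j t : Fin n → ℝ)) :=
      measurable_pi_iff.2 fun j => (hGm j).measurable
    exact (MeasurableEquiv.toLp 2 (Fin n → ℝ)).measurable.comp hpi
  · have hall : ∀ᵐ t ∂μ, ∀ j, g t j = G j t := ae_all_iff.2 hGe
    filter_upwards [hall] with t ht
    ext j
    exact ht j

lemma caraOp_aesm {n : ℕ} {T : ℝ} {α : Fin n → ℝ}
    {f : EuclideanSpace ℝ (Fin n) → ℝ → EuclideanSpace ℝ (Fin n)}
    (hcar : IsCaratheodory T f) (ξ : EuclideanSpace ℝ (Fin n))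
    {φ : ℝ → EuclideanSpace ℝ (Fin n)}
    (hφ : AEStronglyMeasurable φ (volume.restrict (Icc (0:ℝ) T))) :
    AEStronglyMeasurable (caraOp α f ξ φ) (volume.restrict (Icc (0:ℝ) T)) := by
  have hcomp := comp_cara_aesm hcar hφ
  have hj : ∀ j, AEStronglyMeasurable (fun s => f (φ s) s j)
      (volume.restrict (Icc (0:ℝ) T)) := by
    intro j
    have := (EuclideanSpace.proj (𝕜 := ℝ) j).continuous.comp_aestronglyMeasurable hcomp
    exact this
  have hri : AEStronglyMeasurable
      (fun t => (show EuclideanSpace ℝ (Fin n) from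
        WithLp.toLp 2 (fun j => rlInt (α j) (fun s => f (φ s) s j) t)))
      (volume.restrict (Icc (0:ℝ) T)) := by
    apply pi_to_euclidean_aesm
    intro j
    exact rlInt_aesm (hj j)
  exact (aestronglyMeasurable_const.add hri).congr (by rfl)

lemma iterJ_facts {p ρ T M : ℝ} (hρ : 0 < ρ) (hρ1 : ρ ≤ 1) (hpρ : 1 / ρ < p) (hT : 0 < T)
    {ℓ : ℝ → ℝ} (hℓ : MemLp ℓ (ENNReal.ofReal p) (volume.restrict (Icc (0:ℝ) T))) :
    ∀ k : ℕ,
      AEStronglyMeasurable (iterJ ρ (fun s => M * ℓ s) k) (volume.restrict (Icc (0:ℝ) T)) ∧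
      ∃ C : ℝ, 0 ≤ C ∧ ∀ t ∈ Icc (0:ℝ) T, |iterJ ρ (fun s => M * ℓ s) k t| ≤ C := by
  obtain ⟨K, hK⟩ := kernel_holder hρ hρ1 hpρ hT hℓ
  have hΓ : 0 < Real.Gamma ρ := Real.Gamma_pos_of_pos hρ
  have hK0 : 0 ≤ K := by
    have := (hK 0 ⟨le_rfl, hT.le⟩).2
    simpa using this
  intro k
  induction k with
  | zero =>
    refine ⟨by simpa [iterJ] using aestronglyMeasurable_const, 1, zero_le_one, fun t ht => by simp [iterJ]⟩
  | succ k ih =>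
    obtain ⟨ihm, C, hC0, hCb⟩ := ih
    have hmul : AEStronglyMeasurable (fun s => (M * ℓ s) * iterJ ρ (fun u => M * ℓ u) k s)
        (volume.restrict (Icc (0:ℝ) T)) :=
      (aestronglyMeasurable_const.mul hℓ.1).mul ihm
    refine ⟨by simpa [iterJ] using rlInt_aesm hmul, (Real.Gamma ρ)⁻¹ * (|M| * C * K),
      by positivity, fun t ht => ?_⟩
    have ht0 : (0:ℝ) ≤ t := ht.1
    have hsub : Ioc (0:ℝ) t ⊆ Icc (0:ℝ) T := fun s hs => ⟨hs.1.le, hs.2.trans ht.2⟩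
    have hmono : volume.restrict (Ioc (0:ℝ) t) ≤ volume.restrict (Icc (0:ℝ) T) :=
      Measure.restrict_mono hsub le_rfl
    have hkmeas : Measurable fun s : ℝ => (t - s) ^ (ρ - 1) :=
      (measurable_const.sub measurable_id).pow measurable_const
    have hA : AEStronglyMeasurable
        (fun s => (t - s) ^ (ρ - 1) • ((M * ℓ s) * iterJ ρ (fun u => M * ℓ u) k s))
        (volume.restrict (Ioc (0:ℝ) t)) :=
      (hkmeas.aestronglyMeasurable.mul (hmul.mono_measure hmono))
    have hg : IntegrableOn (fun s => (|M| * C) * ((t - s) ^ (ρ - 1) * |ℓ s|))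
        (Ioc (0:ℝ) t) volume := (hK t ht).1.const_mul _
    have hbd : ∀ᵐ s ∂volume.restrict (Ioc (0:ℝ) t),
        ‖(t - s) ^ (ρ - 1) • ((M * ℓ s) * iterJ ρ (fun u => M * ℓ u) k s) - 0‖ ≤
          (|M| * C) * ((t - s) ^ (ρ - 1) * |ℓ s|) := by
      filter_upwards [ae_restrict_mem measurableSet_Ioc] with s hs
      have hts : (0:ℝ) ≤ t - s := by linarith [hs.2]
      have hkr : (0:ℝ) ≤ (t - s) ^ (ρ - 1) := Real.rpow_nonneg hts _
      rw [sub_zero, smul_eq_mul, Real.norm_eq_abs, abs_mul, abs_mul,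
        abs_of_nonneg hkr]
      have h1 : |iterJ ρ (fun u => M * ℓ u) k s| ≤ C := hCb s (hsub hs)
      calc (t - s) ^ (ρ - 1) * (|M * ℓ s| * |iterJ ρ (fun u => M * ℓ u) k s|)
          ≤ (t - s) ^ (ρ - 1) * ((|M| * |ℓ s|) * C) := by
            rw [abs_mul]
            apply mul_le_mul_of_nonneg_left _ hkr
            exact mul_le_mul_of_nonneg_left h1 (by positivity)
        _ = (|M| * C) * ((t - s) ^ (ρ - 1) * |ℓ s|) := by ring
    have key := diff_integral_bound (B := fun _ => (0:ℝ)) ht0 hA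
      aestronglyMeasurable_const hg hbd
    simp only [intervalIntegral.integral_zero, sub_zero] at key
    have hval : ∫ s in (0:ℝ)..t, (|M| * C) * ((t - s) ^ (ρ - 1) * |ℓ s|) ≤ |M| * C * K := by
      rw [intervalIntegral.integral_const_mul, intervalIntegral.integral_of_le ht0]
      exact mul_le_mul_of_nonneg_left (hK t ht).2 (by positivity)
    have : |iterJ ρ (fun u => M * ℓ u) (k+1) t| =
        (Real.Gamma ρ)⁻¹ *
        ‖∫ s in (0:ℝ)..t, (t - s) ^ (ρ - 1) • ((M * ℓ s) * iterJ ρ (fun u => M * ℓ u) k s)‖ := by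
      show |rlInt ρ _ t| = _
      rw [rlInt, smul_eq_mul, abs_mul, abs_of_nonneg (inv_nonneg.2 hΓ.le), Real.norm_eq_abs]
    rw [this]
    apply mul_le_mul_of_nonneg_left _ (inv_nonneg.2 hΓ.le)
    exact key.trans hval

end Aux

/-- Iterated contraction estimate: with `α₀ = min α_j`, `M = Σ_j T^(α_j-α₀) Γ(α₀)/Γ(α_j)`,
`F_k` the `k`-th iterated Riemann–Liouville integral built from `M ℓ`, one has
`‖𝒯^k(φ)(t) - 𝒯^k(ψ)(t)‖ ≤ ‖φ - ψ‖_{C([0,T];ℝⁿ)} F_k(t)`. -/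
theorem caraOp_iterate_estimate
    (n : ℕ) (hn : 1 ≤ n) (T : ℝ) (hT : 0 < T)
    (α : Fin n → ℝ) (hα : ∀ j, α j ∈ Ioc (0:ℝ) 1)
    (p : ℝ) (hp : ∀ j, 1 / α j < p)
    (f : EuclideanSpace ℝ (Fin n) → ℝ → EuclideanSpace ℝ (Fin n))
    (hcar : IsCaratheodory T f)
    (hgrowth : ∃ C > (0:ℝ), ∃ γ : ℝ → ℝ,
      MemLp γ (ENNReal.ofReal p) (volume.restrict (Icc (0:ℝ) T)) ∧
      ∀ᵐ t ∂(volume.restrict (Icc (0:ℝ) T)), ∀ x, ‖f x t‖ ≤ C * ‖x‖ + γ t)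
    (ℓ : ℝ → ℝ) (hℓ : MemLp ℓ (ENNReal.ofReal p) (volume.restrict (Icc (0:ℝ) T)))
    (hlip : ∀ᵐ t ∂(volume.restrict (Icc (0:ℝ) T)), ∀ x y, ‖f x t - f y t‖ ≤ ℓ t * ‖x - y‖)
    (ξ : EuclideanSpace ℝ (Fin n))
    (α₀ M : ℝ) (hα₀ : α₀ = ⨅ j, α j)
    (hM : M = ∑ j, T ^ (α j - α₀) * Real.Gamma α₀ / Real.Gamma (α j)) :
    ∀ k : ℕ, ∀ φ ψ : ℝ → EuclideanSpace ℝ (Fin n),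
      ContinuousOn φ (Icc 0 T) → ContinuousOn ψ (Icc 0 T) →
      ∀ t ∈ Icc (0:ℝ) T,
        ‖(caraOp α f ξ)^[k] φ t - (caraOp α f ξ)^[k] ψ t‖ ≤
          (⨆ s : Icc (0:ℝ) T, ‖φ s - ψ s‖) * iterJ α₀ (fun s => M * ℓ s) k t := by
  -- basic facts about α₀
  have hnpos : 0 < n := hn
  have : Nonempty (Fin n) := ⟨⟨0, hnpos⟩⟩
  have hbdd : BddBelow (range α) := (Set.finite_range α).bddBelow
  obtain ⟨j₀, hj₀⟩ : ∃ j₀, ∀ j, α j₀ ≤ α j := Finite.exists_min α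
  have hα₀eq : α₀ = α j₀ := by
    rw [hα₀]
    exact le_antisymm (ciInf_le hbdd j₀) (le_ciInf hj₀)
  have hα₀pos : 0 < α₀ := hα₀eq ▸ (hα j₀).1
  have hα₀1 : α₀ ≤ 1 := hα₀eq ▸ (hα j₀).2
  have hα₀le : ∀ j, α₀ ≤ α j := fun j => hα₀eq ▸ hj₀ j
  have hpα₀ : 1 / α₀ < p := hα₀eq ▸ hp j₀
  have hp1 : 1 < p := lt_of_le_of_lt (by
    rw [le_div_iff₀ hα₀pos]; linarith) hpα₀
  have hΓ0 : 0 < Real.Gamma α₀ := Real.Gamma_pos_of_pos hα₀pos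
  have hΓj : ∀ j, 0 < Real.Gamma (α j) := fun j => Real.Gamma_pos_of_pos (hα j).1
  -- nonnegativity of ℓ a.e.
  have hℓ0 : ∀ᵐ s ∂(volume.restrict (Icc (0:ℝ) T)), 0 ≤ ℓ s := by
    filter_upwards [hlip] with s hs
    have h1 : (0:ℝ) ≤ ℓ s * ‖(0 : EuclideanSpace ℝ (Fin n)) -
        EuclideanSpace.single ⟨0, hnpos⟩ (1:ℝ)‖ :=
      le_trans (norm_nonneg _) (hs 0 _)
    have h2 : ‖(0 : EuclideanSpace ℝ (Fin n)) -
        EuclideanSpace.single ⟨0, hnpos⟩ (1:ℝ)‖ = 1 := by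
      rw [zero_sub, norm_neg, EuclideanSpace.norm_single, norm_one]
    rw [h2, mul_one] at h1
    exact h1
  -- coordinate norms
  have coord_le : ∀ (v : EuclideanSpace ℝ (Fin n)) j, |v j| ≤ ‖v‖ := by
    intro v j
    rw [EuclideanSpace.norm_eq, ← Real.sqrt_sq_eq_abs]
    apply Real.sqrt_le_sqrt
    have : |v j| ^ 2 = ‖v j‖ ^ 2 := by rw [Real.norm_eq_abs]
    rw [← sq_abs, this]
    exact Finset.single_le_sum (f := fun i => ‖v i‖ ^ 2)
      (fun i _ => sq_nonneg _) (Finset.mem_univ j)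
  have norm_le_sum : ∀ v : EuclideanSpace ℝ (Fin n), ‖v‖ ≤ ∑ j, |v j| := by
    intro v
    rw [EuclideanSpace.norm_eq]
    calc Real.sqrt (∑ i, ‖v i‖ ^ 2) ≤ Real.sqrt ((∑ i, ‖v i‖) ^ 2) :=
          Real.sqrt_le_sqrt (Finset.sum_sq_le_sq_sum_of_nonneg fun i _ => norm_nonneg _)
      _ = ∑ i, ‖v i‖ := Real.sqrt_sq (Finset.sum_nonneg fun i _ => norm_nonneg _)
      _ = ∑ i, |v i| := by simp [Real.norm_eq_abs]
  -- the Hölder bound and iterJ facts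
  obtain ⟨K, hK⟩ := kernel_holder hα₀pos hα₀1 hpα₀ hT hℓ
  have hFk := iterJ_facts (M := M) hα₀pos hα₀1 hpα₀ hT hℓ
  intro k φ ψ hφ hψ
  -- measurability of iterates
  have hiterm : ∀ (m : ℕ) (χ : ℝ → EuclideanSpace ℝ (Fin n)), ContinuousOn χ (Icc 0 T) →
      AEStronglyMeasurable ((caraOp α f ξ)^[m] χ) (volume.restrict (Icc (0:ℝ) T)) := by
    intro m
    induction m with
    | zero => exact fun χ hχ => hχ.aestronglyMeasurable measurableSet_Icc
    | succ m ih =>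
      intro χ hχ
      rw [Function.iterate_succ_apply']
      exact caraOp_aesm hcar ξ (ih χ hχ)
  -- sup bound
  set D : ℝ := ⨆ s : Icc (0:ℝ) T, ‖φ s - ψ s‖ with hD
  have hD0 : 0 ≤ D := Real.iSup_nonneg fun s => norm_nonneg _
  have hDbdd : BddAbove (range fun s : Icc (0:ℝ) T => ‖φ s - ψ s‖) := by
    have hcont : ContinuousOn (fun s => ‖φ s - ψ s‖) (Icc (0:ℝ) T) := (hφ.sub hψ).norm
    have := isCompact_Icc.bddAbove_image hcont
    rwa [← Set.range_restrict] at this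
  have hDle : ∀ t ∈ Icc (0:ℝ) T, ‖φ t - ψ t‖ ≤ D :=
    fun t ht => le_ciSup hDbdd (⟨t, ht⟩ : Icc (0:ℝ) T)
  induction k with
  | zero =>
    intro t ht
    simpa [iterJ] using hDle t ht
  | succ k ih =>
    intro t ht
    have ht0 : (0:ℝ) ≤ t := ht.1
    have hsub : Ioc (0:ℝ) t ⊆ Icc (0:ℝ) T := fun s hs => ⟨hs.1.le, hs.2.trans ht.2⟩
    have hmono : volume.restrict (Ioc (0:ℝ) t) ≤ volume.restrict (Icc (0:ℝ) T) :=
      Measure.restrict_mono hsub le_rfl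
    set Φ := (caraOp α f ξ)^[k] φ with hΦ
    set Ψ := (caraOp α f ξ)^[k] ψ with hΨ
    rw [Function.iterate_succ_apply', Function.iterate_succ_apply']
    have hΦm : AEStronglyMeasurable Φ (volume.restrict (Icc (0:ℝ) T)) := hiterm k φ hφ
    have hΨm : AEStronglyMeasurable Ψ (volume.restrict (Icc (0:ℝ) T)) := hiterm k ψ hψ
    set A : Fin n → ℝ → ℝ := fun j s => f (Φ s) s j with hA
    set B : Fin n → ℝ → ℝ := fun j s => f (Ψ s) s j with hB
    have hAm : ∀ j, AEStronglyMeasurable (A j) (volume.restrict (Icc (0:ℝ) T)) := by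
      intro j
      exact (EuclideanSpace.proj (𝕜 := ℝ) j).continuous.comp_aestronglyMeasurable
        (comp_cara_aesm hcar hΦm)
    have hBm : ∀ j, AEStronglyMeasurable (B j) (volume.restrict (Icc (0:ℝ) T)) := by
      intro j
      exact (EuclideanSpace.proj (𝕜 := ℝ) j).continuous.comp_aestronglyMeasurable
        (comp_cara_aesm hcar hΨm)
    obtain ⟨hFkm, C, hC0, hCb⟩ := hFk k
    set Fk : ℝ → ℝ := iterJ α₀ (fun u => M * ℓ u) k with hFkdef
    set g : Fin n → ℝ → ℝ := fun j s =>
      T ^ (α j - α₀) * ((t - s) ^ (α₀ - 1) * (ℓ s * (D * Fk s))) with hg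
    -- integrability of the bounds
    have hgint : ∀ j, IntegrableOn (g j) (Ioc (0:ℝ) t) volume := by
      intro j
      have hbig : IntegrableOn
          (fun s => (T ^ (α j - α₀) * (D * C)) * ((t - s) ^ (α₀ - 1) * |ℓ s|))
          (Ioc (0:ℝ) t) volume := (hK t ht).1.const_mul _
      apply Integrable.mono' hbig
      · apply AEStronglyMeasurable.const_mul
        apply AEStronglyMeasurable.mul
        · exact ((measurable_const.sub measurable_id).pow
            measurable_const).aestronglyMeasurable
        · exact ((hℓ.1.mono_measure hmono).mul
            ((aestronglyMeasurable_const.mul (hFkm.mono_measure hmono))))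
      · filter_upwards [ae_restrict_mem measurableSet_Ioc] with s hs
        have hts : (0:ℝ) ≤ t - s := by linarith [hs.2]
        have hker : (0:ℝ) ≤ (t - s) ^ (α₀ - 1) := Real.rpow_nonneg hts _
        have hTp : (0:ℝ) ≤ T ^ (α j - α₀) := Real.rpow_nonneg hT.le _
        have hFb : |Fk s| ≤ C := hCb s (hsub hs)
        rw [Real.norm_eq_abs, abs_mul, abs_of_nonneg hTp, abs_mul, abs_of_nonneg hker]
        calc T ^ (α j - α₀) * ((t - s) ^ (α₀ - 1) * |ℓ s * (D * Fk s)|)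
            ≤ T ^ (α j - α₀) * ((t - s) ^ (α₀ - 1) * (|ℓ s| * (D * C))) := by
              apply mul_le_mul_of_nonneg_left _ hTp
              apply mul_le_mul_of_nonneg_left _ hker
              rw [abs_mul, abs_mul]
              apply mul_le_mul_of_nonneg_left _ (abs_nonneg _)
              rw [abs_of_nonneg hD0]
              exact mul_le_mul_of_nonneg_left hFb hD0
          _ = (T ^ (α j - α₀) * (D * C)) * ((t - s) ^ (α₀ - 1) * |ℓ s|) := by ring
    -- a.e. s ≠ t
    have hne : ∀ᵐ s ∂volume.restrict (Ioc (0:ℝ) t), s ≠ t := by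
      rw [ae_iff]
      have h1 : {s : ℝ | ¬ s ≠ t} = {t} := by ext s; simp
      rw [h1]
      exact le_antisymm (le_trans (Measure.restrict_le_self _)
        (by simp [Real.volume_singleton])) zero_le
    -- the key coordinate estimate
    have hcoord : ∀ j,
        |rlInt (α j) (A j) t - rlInt (α j) (B j) t| ≤
          (Real.Gamma (α j))⁻¹ * ∫ s in (0:ℝ)..t, g j s := by
      intro j
      have hΓ := hΓj j
      have hAjm : AEStronglyMeasurable (fun s => (t - s) ^ (α j - 1) • A j s)
          (volume.restrict (Ioc (0:ℝ) t)) :=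
        ((measurable_const.sub measurable_id).pow
          measurable_const).aestronglyMeasurable.mul ((hAm j).mono_measure hmono)
      have hBjm : AEStronglyMeasurable (fun s => (t - s) ^ (α j - 1) • B j s)
          (volume.restrict (Ioc (0:ℝ) t)) :=
        ((measurable_const.sub measurable_id).pow
          measurable_const).aestronglyMeasurable.mul ((hBm j).mono_measure hmono)
      have hbd : ∀ᵐ s ∂volume.restrict (Ioc (0:ℝ) t),
          ‖(t - s) ^ (α j - 1) • A j s - (t - s) ^ (α j - 1) • B j s‖ ≤ g j s := by
        filter_upwards [ae_restrict_mem measurableSet_Ioc, hne,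
          (hlip.filter_mono (ae_mono hmono)), (hℓ0.filter_mono (ae_mono hmono))]
          with s hs hsne hlips hℓs
        have hst : s < t := lt_of_le_of_ne hs.2 hsne
        have hts : (0:ℝ) < t - s := by linarith
        have htsT : t - s ≤ T := by
          have := hs.1
          have := ht.2
          linarith
        have hker : (0:ℝ) ≤ (t - s) ^ (α j - 1) := Real.rpow_nonneg hts.le _
        have hIH : ‖Φ s - Ψ s‖ ≤ D * Fk s := ih s (hsub hs)
        have hIH0 : 0 ≤ D * Fk s := le_trans (norm_nonneg _) hIH
        have hf : |A j s - B j s| ≤ ℓ s * (D * Fk s) := by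
          have h1 : |A j s - B j s| ≤ ‖f (Φ s) s - f (Ψ s) s‖ := by
            have := coord_le (f (Φ s) s - f (Ψ s) s) j
            simpa [hA, hB] using this
          refine h1.trans ((hlips _ _).trans ?_)
          exact mul_le_mul_of_nonneg_left hIH hℓs
        have hkerb : (t - s) ^ (α j - 1) ≤ T ^ (α j - α₀) * (t - s) ^ (α₀ - 1) := by
          have hsplit : (t - s) ^ (α j - 1) =
              (t - s) ^ (α j - α₀) * (t - s) ^ (α₀ - 1) := by
            rw [← Real.rpow_add hts]
            ring_nf
          rw [hsplit]
          apply mul_le_mul_of_nonneg_right _ (Real.rpow_nonneg hts.le _)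
          exact Real.rpow_le_rpow hts.le htsT (by linarith [hα₀le j])
        calc ‖(t - s) ^ (α j - 1) • A j s - (t - s) ^ (α j - 1) • B j s‖
            = (t - s) ^ (α j - 1) * |A j s - B j s| := by
              rw [smul_eq_mul, smul_eq_mul, ← mul_sub, Real.norm_eq_abs, abs_mul,
                abs_of_nonneg hker]
          _ ≤ (T ^ (α j - α₀) * (t - s) ^ (α₀ - 1)) * (ℓ s * (D * Fk s)) := by
              apply mul_le_mul hkerb hf (abs_nonneg _)
              positivity
          _ = g j s := by rw [hg]; ring
      have hbound := diff_integral_bound ht0 hAjm hBjm (hgint j) hbd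
      have : rlInt (α j) (A j) t - rlInt (α j) (B j) t =
          (Real.Gamma (α j))⁻¹ * ((∫ s in (0:ℝ)..t, (t - s) ^ (α j - 1) • A j s) -
            ∫ s in (0:ℝ)..t, (t - s) ^ (α j - 1) • B j s) := by
        rw [rlInt, rlInt, smul_eq_mul, smul_eq_mul, mul_sub]
      rw [this, abs_mul, abs_of_nonneg (inv_nonneg.2 hΓ.le)]
      apply mul_le_mul_of_nonneg_left _ (inv_nonneg.2 hΓ.le)
      exact le_trans hbound le_rfl
    -- sum up
    have hnorm : ‖caraOp α f ξ Φ t - caraOp α f ξ Ψ t‖ ≤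
        ∑ j, |rlInt (α j) (A j) t - rlInt (α j) (B j) t| := by
      have hdiff : ∀ j, (caraOp α f ξ Φ t - caraOp α f ξ Ψ t) j =
          rlInt (α j) (A j) t - rlInt (α j) (B j) t := by
        intro j
        show (ξ + _ - (ξ + _) : EuclideanSpace ℝ (Fin n)) j = _
        rw [add_sub_add_left_eq_sub]
        rfl
      calc ‖caraOp α f ξ Φ t - caraOp α f ξ Ψ t‖
          ≤ ∑ j, |(caraOp α f ξ Φ t - caraOp α f ξ Ψ t) j| := norm_le_sum _
        _ = ∑ j, |rlInt (α j) (A j) t - rlInt (α j) (B j) t| := by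
            apply Finset.sum_congr rfl
            intro j _
            rw [hdiff j]
    -- compute the sum of integrals
    set I : ℝ := ∫ s in (0:ℝ)..t, ((t - s) ^ (α₀ - 1) * (ℓ s * Fk s)) with hI
    have hgval : ∀ j, ∫ s in (0:ℝ)..t, g j s = T ^ (α j - α₀) * (D * I) := by
      intro j
      have : ∀ s, g j s = (T ^ (α j - α₀) * D) * ((t - s) ^ (α₀ - 1) * (ℓ s * Fk s)) := by
        intro s; rw [hg]; ring
      simp only [this]
      rw [intervalIntegral.integral_const_mul, hI]
      ring
    have hRHS : iterJ α₀ (fun u => M * ℓ u) (k + 1) t = (Real.Gamma α₀)⁻¹ * (M * I) := by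
      show rlInt α₀ (fun s => (M * ℓ s) * Fk s) t = _
      rw [rlInt, smul_eq_mul]
      have : ∀ s, (t - s) ^ (α₀ - 1) • ((M * ℓ s) * Fk s) =
          M * ((t - s) ^ (α₀ - 1) * (ℓ s * Fk s)) := by
        intro s; rw [smul_eq_mul]; ring
      simp only [this]
      rw [intervalIntegral.integral_const_mul, hI]
    have hsum : (∑ j, (Real.Gamma (α j))⁻¹ * T ^ (α j - α₀)) = (Real.Gamma α₀)⁻¹ * M := by
      rw [hM, Finset.mul_sum]
      apply Finset.sum_congr rfl
      intro j _
      field_simp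
    calc ‖caraOp α f ξ Φ t - caraOp α f ξ Ψ t‖
        ≤ ∑ j, |rlInt (α j) (A j) t - rlInt (α j) (B j) t| := hnorm
      _ ≤ ∑ j, (Real.Gamma (α j))⁻¹ * ∫ s in (0:ℝ)..t, g j s :=
          Finset.sum_le_sum fun j _ => hcoord j
      _ = (∑ j, (Real.Gamma (α j))⁻¹ * T ^ (α j - α₀)) * (D * I) := by
          rw [Finset.sum_mul]
          apply Finset.sum_congr rfl
          intro j _
          rw [hgval j]
          ring
      _ = D * iterJ α₀ (fun u => M * ℓ u) (k + 1) t := by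
          rw [hsum, hRHS]
          ring
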